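/- Let σ and τ be disjoint finite sets with |σ| = i+1 and |τ| = d−i+1 where 2 ≤ i ≤ d/2, and let P ⊂ ℝ^d be a simplicial d-polytope whose boundary complex equals ∂σ̄ * ∂τ̄ (the join of the boundaries of the simplices on σ and on τ). Then the relative interiors of conv(p(σ)) and conv(p(τ)) intersect; i.e., there exist positive reals (c_v) with Σ_{v∈σ} c_v = Σ_{v∈τ} c_v = 1 and Σ_{v∈σ} c_v p(v) = Σ_{v∈τ} c_v p(v). -/

import Mathlib

open scoped Classical

noncomputable section

/-- The body of the polytope with vertex embedding `p`. -/
def body {V : Type} [Fintype V] {d : ℕ} (p : V → EuclideanSpace ℝ (Fin d)) :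
    Set (EuclideanSpace ℝ (Fin d)) :=
  convexHull ℝ (Set.range p)

/-- A finite vertex set `F` spans a proper (exposed) face of the polytope. -/
def IsBdryFace {V : Type} [Fintype V] {d : ℕ} (p : V → EuclideanSpace ℝ (Fin d))
    (F : Finset V) : Prop :=
  IsExposed ℝ (body p) (convexHull ℝ (p '' (F : Set V))) ∧
    convexHull ℝ (p '' (F : Set V)) ≠ body p

/-- `p` is the vertex embedding of a simplicial `d`-polytope: the points are distinct
extreme points, they affinely span `ℝ^d`, and every proper exposed face is the convex hull
of an affinely independent set of vertices (a geometric simplex). -/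
structure IsSimplicialPolytope {V : Type} [Fintype V] {d : ℕ}
    (p : V → EuclideanSpace ℝ (Fin d)) : Prop where
  inj : Function.Injective p
  spans : affineSpan ℝ (Set.range p) = ⊤
  vertex : ∀ v, p v ∈ Set.extremePoints ℝ (body p)
  simplicial : ∀ F : Set (EuclideanSpace ℝ (Fin d)), IsExposed ℝ (body p) F →
    F ≠ body p → ∃ W : Finset V,
      AffineIndependent ℝ (fun w : (W : Set V) => p w) ∧ F = convexHull ℝ (p '' W)

/-- The graph of the polytope: two vertices are adjacent iff they span a proper face. -/
def polyGraph {V : Type} [Fintype V] {d : ℕ} (p : V → EuclideanSpace ℝ (Fin d)) :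
    SimpleGraph V where
  Adj a b := a ≠ b ∧ IsBdryFace p {a, b}
  symm := by
    constructor
    intro a b h
    exact ⟨h.1.symm, by rw [Finset.pair_comm]; exact h.2⟩
  loopless := by constructor; intro a h; exact h.1 rfl
section Helpers

variable {V : Type} [Fintype V] {d : ℕ} {p : V → EuclideanSpace ℝ (Fin d)}

/-- An extreme point of the body lying in the convex hull of some vertices must be one
of those vertices. -/
lemma vertex_mem_of_mem_hull (hP : IsSimplicialPolytope p) {B : Finset V} {v : V}
    (hv : p v ∈ convexHull ℝ (p '' (B : Set V))) : v ∈ B := by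
  have hext := hP.vertex v
  have hsub : convexHull ℝ (p '' (B : Set V)) ⊆ body p :=
    convexHull_mono (Set.image_subset_range _ _)
  have h2 : p v ∈ Set.extremePoints ℝ (convexHull ℝ (p '' (B : Set V))) := by
    rw [mem_extremePoints] at hext ⊢
    exact ⟨hv, fun x₁ h₁ x₂ h₂ hseg => hext.2 x₁ (hsub h₁) x₂ (hsub h₂) hseg⟩
  obtain ⟨b, hb, hbv⟩ := extremePoints_convexHull_subset h2
  exact (hP.inj hbv) ▸ hb

/-- If a positive convex combination of the vertices in `A` lies on the (exposed, proper)
face spanned by `B`, then `A ⊆ B`. -/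
lemma exposed_absorb (hP : IsSimplicialPolytope p) {A B : Finset V} (hB : IsBdryFace p B)
    {w : V → ℝ} (hw : ∀ a ∈ A, 0 < w a) (hsum : ∑ a ∈ A, w a = 1)
    (hx : ∑ a ∈ A, w a • p a ∈ convexHull ℝ (p '' (B : Set V))) : A ⊆ B := by
  set x := ∑ a ∈ A, w a • p a with hxdef
  obtain ⟨l, hl⟩ := hB.1 ⟨x, hx⟩
  rw [hl] at hx
  obtain ⟨hxbody, hxmax⟩ := hx
  intro a ha
  have hpa : ∀ b ∈ A, p b ∈ body p := fun b _ => subset_convexHull ℝ _ (Set.mem_range_self b)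
  have hle : ∀ b ∈ A, l (p b) ≤ l x := fun b hb => hxmax _ (hpa b hb)
  have hlx : l x = ∑ b ∈ A, w b * l (p b) := by
    rw [hxdef, map_sum]
    exact Finset.sum_congr rfl fun b _ => by rw [map_smul]; rfl
  have heq : l (p a) = l x := by
    by_contra hne
    have hlt : l (p a) < l x := lt_of_le_of_ne (hle a ha) hne
    have hstrict : ∑ b ∈ A, w b * l (p b) < ∑ b ∈ A, w b * l x :=
      Finset.sum_lt_sum (fun b hb => mul_le_mul_of_nonneg_left (hle b hb) (hw b hb).le)
        ⟨a, ha, mul_lt_mul_of_pos_left hlt (hw a ha)⟩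
    rw [← Finset.sum_mul, hsum, one_mul, ← hlx] at hstrict
    exact lt_irrefl _ hstrict
  have hmem : p a ∈ convexHull ℝ (p '' (B : Set V)) := by
    rw [hl]
    exact ⟨hpa a ha, fun y hy => heq ▸ hxmax y hy⟩
  exact vertex_mem_of_mem_hull hP hmem

/-- From a weighting which is positive on `σ`, negative on `τ`, and gives a total affine
dependence, build the desired common relative-interior point weights. -/
lemma build_weights {σ τ : Finset V} (hdisj : Disjoint σ τ) (huniv : σ ∪ τ = Finset.univ)
    (hσne : σ.Nonempty) {w : V → ℝ}
    (hpos : ∀ v ∈ σ, 0 < w v) (hneg : ∀ v ∈ τ, w v < 0)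
    (hsum : ∑ v, w v = 0) (hvec : ∑ v, w v • p v = 0) :
    ∃ c : V → ℝ, (∀ v, 0 < c v) ∧ (∑ v ∈ σ, c v = 1) ∧ (∑ v ∈ τ, c v = 1) ∧
      (∑ v ∈ σ, c v • p v = ∑ v ∈ τ, c v • p v) := by
  set s := ∑ v ∈ σ, w v with hsdef
  have hs : 0 < s := Finset.sum_pos hpos hσne
  have hsplit : s + ∑ v ∈ τ, w v = 0 := by
    rw [hsdef, ← Finset.sum_union hdisj, huniv]; exact hsum
  have hsplitv : (∑ v ∈ σ, w v • p v) + ∑ v ∈ τ, w v • p v = 0 := by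
    rw [← Finset.sum_union hdisj, huniv]; exact hvec
  have hτσ : ∀ v ∈ τ, v ∉ σ := fun v hv hvσ => Finset.disjoint_left.1 hdisj hvσ hv
  refine ⟨fun v => if v ∈ σ then w v / s else -w v / s, ?_, ?_, ?_, ?_⟩
  · intro v
    by_cases hv : v ∈ σ
    · simp only [if_pos hv]; exact div_pos (hpos v hv) hs
    · simp only [if_neg hv]
      have hvτ : v ∈ τ := by
        have h := Finset.mem_univ v
        rw [← huniv, Finset.mem_union] at h
        tauto
      exact div_pos (neg_pos.2 (hneg v hvτ)) hs
  · rw [Finset.sum_congr rfl (fun v hv => if_pos hv), ← Finset.sum_div, ← hsdef,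
      div_self hs.ne']
  · rw [Finset.sum_congr rfl (fun v hv => if_neg (hτσ v hv)), ← Finset.sum_div,
      Finset.sum_neg_distrib]
    have h1 : -∑ v ∈ τ, w v = s := by linarith
    rw [h1, div_self hs.ne']
  · have h1 : ∀ v ∈ σ, (if v ∈ σ then w v / s else -w v / s) • p v = s⁻¹ • (w v • p v) := by
      intro v hv; rw [if_pos hv, div_eq_inv_mul, mul_smul]
    have h2 : ∀ v ∈ τ, (if v ∈ σ then w v / s else -w v / s) • p v
        = s⁻¹ • (-(w v • p v)) := by
      intro v hv; rw [if_neg (hτσ v hv), div_eq_inv_mul, mul_smul, neg_smul]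
    rw [Finset.sum_congr rfl h1, Finset.sum_congr rfl h2, ← Finset.smul_sum, ← Finset.smul_sum]
    congr 1
    rw [Finset.sum_neg_distrib]
    exact eq_neg_of_add_eq_zero_left hsplitv

end Helpers

/-- let `σ`, `τ` partition the vertex set, with `|σ| = i+1`,
`|τ| = d−i+1`, `2 ≤ i ≤ d/2`, and let `P` be a simplicial `d`-polytope whose boundary
complex is the join `∂σ̄ * ∂τ̄` (a set of vertices spans a proper face iff it contains
neither `σ` nor `τ`). Then the relative interiors of `conv(p σ)` and `conv(p τ)`
intersect: there are positive weights with both groups summing to `1` and equal weighted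
vertex sums. -/
theorem stmt19 {V : Type} [Fintype V] {d i : ℕ} (hi : 2 ≤ i) (hd : 2 * i ≤ d)
    (σ τ : Finset V) (hdisj : Disjoint σ τ) (huniv : σ ∪ τ = Finset.univ)
    (hσ : σ.card = i + 1) (hτ : τ.card = d - i + 1)
    (p : V → EuclideanSpace ℝ (Fin d)) (hP : IsSimplicialPolytope p)
    (hbdry : ∀ S : Finset V, IsBdryFace p S ↔ (¬ σ ⊆ S ∧ ¬ τ ⊆ S)) :
    ∃ c : V → ℝ, (∀ v, 0 < c v) ∧
      (∑ v ∈ σ, c v = 1) ∧ (∑ v ∈ τ, c v = 1) ∧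
      (∑ v ∈ σ, c v • p v = ∑ v ∈ τ, c v • p v) := by

  classical
  have hile : i ≤ d := by omega
  have hcard : Fintype.card V = d + 2 := by
    rw [← Finset.card_univ, ← huniv, Finset.card_union_of_disjoint hdisj, hσ, hτ]; omega
  have hσne : σ.Nonempty := Finset.card_pos.1 (by omega)
  -- a nonzero affine dependence among the d+2 points
  have hnotind : ¬ AffineIndependent ℝ p := by
    intro h
    have h1 := h.card_le_finrank_succ
    have h2 := Submodule.finrank_le (vectorSpan ℝ (Set.range p))
    rw [finrank_euclideanSpace_fin] at h2
    omega
  rw [affineIndependent_iff] at hnotind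
  push_neg at hnotind
  obtain ⟨t, w₀, hw0sum, hw0vec, e, het, hwe0⟩ := hnotind
  set w : V → ℝ := fun v => if v ∈ t then w₀ v else 0 with hwdef
  have hwsum : ∑ v, w v = 0 := by
    rw [hwdef]; rw [Finset.sum_ite_mem, Finset.univ_inter]; exact hw0sum
  have hwvec : ∑ v, w v • p v = 0 := by
    have hc : ∀ v ∈ Finset.univ, w v • p v = if v ∈ t then w₀ v • p v else 0 := by
      intro v _; by_cases hv : v ∈ t <;> simp [hwdef, hv]
    rw [Finset.sum_congr rfl hc, Finset.sum_ite_mem, Finset.univ_inter]; exact hw0vec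
  have hwe : w e ≠ 0 := by simpa [hwdef, het] using hwe0
  set A : Finset V := Finset.univ.filter (fun v => 0 < w v) with hAdef
  set B : Finset V := Finset.univ.filter (fun v => w v < 0) with hBdef
  have hmemA : ∀ v, v ∈ A ↔ 0 < w v := fun v => by simp [hAdef]
  have hmemB : ∀ v, v ∈ B ↔ w v < 0 := fun v => by simp [hBdef]
  have hABdisj : Disjoint A B := by
    rw [Finset.disjoint_left]
    intro v hvA hvB
    have h1 := (hmemA v).1 hvA
    have h2 := (hmemB v).1 hvB
    linarith
  have hBne : B.Nonempty := by
    by_contra h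
    rw [Finset.not_nonempty_iff_eq_empty] at h
    have hge : ∀ v ∈ Finset.univ, 0 ≤ w v := by
      intro v _
      by_contra hlt
      have hvB : v ∈ B := (hmemB v).2 (by linarith)
      simp [h] at hvB
    exact hwe ((Finset.sum_eq_zero_iff_of_nonneg hge).1 hwsum e (Finset.mem_univ e))
  have hAne : A.Nonempty := by
    by_contra h
    rw [Finset.not_nonempty_iff_eq_empty] at h
    have hge : ∀ v ∈ Finset.univ, w v ≤ 0 := by
      intro v _
      by_contra hlt
      have hvA : v ∈ A := (hmemA v).2 (by linarith)
      simp [h] at hvA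
    exact hwe ((Finset.sum_eq_zero_iff_of_nonpos hge).1 hwsum e (Finset.mem_univ e))
  have hzero : ∀ v ∈ Finset.univ, v ∉ A ∪ B → w v = 0 := by
    intro v _ hv
    rw [Finset.mem_union, hmemA, hmemB] at hv
    push_neg at hv
    linarith [hv.1, hv.2]
  have hsplitAB : ∑ v ∈ A, w v + ∑ v ∈ B, w v = 0 := by
    rw [← Finset.sum_union hABdisj,
      Finset.sum_subset (Finset.subset_univ _) hzero]
    exact hwsum
  have hsplitABv : (∑ v ∈ A, w v • p v) + ∑ v ∈ B, w v • p v = 0 := by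
    rw [← Finset.sum_union hABdisj,
      Finset.sum_subset (Finset.subset_univ _)
        (fun v hv h => by rw [hzero v hv h, zero_smul])]
    exact hwvec
  set S : ℝ := ∑ v ∈ A, w v with hSdef
  have hSpos : 0 < S := Finset.sum_pos (fun v hv => (hmemA v).1 hv) hAne
  have hBsum : ∑ v ∈ B, -w v = S := by rw [Finset.sum_neg_distrib]; linarith
  have hsumA : ∑ v ∈ A, w v / S = 1 := by
    rw [← Finset.sum_div, ← hSdef, div_self hSpos.ne']
  have hsumB : ∑ v ∈ B, -w v / S = 1 := by
    rw [← Finset.sum_div, hBsum, div_self hSpos.ne']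
  have hxeq : ∑ v ∈ A, (w v / S) • p v = ∑ v ∈ B, (-w v / S) • p v := by
    have hA' : ∀ v ∈ A, (w v / S) • p v = S⁻¹ • (w v • p v) := by
      intro v _; rw [div_eq_inv_mul, mul_smul]
    have hB' : ∀ v ∈ B, (-w v / S) • p v = S⁻¹ • (-(w v • p v)) := by
      intro v _; rw [div_eq_inv_mul, mul_smul, neg_smul]
    rw [Finset.sum_congr rfl hA', Finset.sum_congr rfl hB', ← Finset.smul_sum,
      ← Finset.smul_sum]
    congr 1
    rw [Finset.sum_neg_distrib]
    exact eq_neg_of_add_eq_zero_left hsplitABv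
  have hxA : ∑ v ∈ A, (w v / S) • p v ∈ convexHull ℝ (p '' (A : Set V)) := by
    rw [← Finset.centerMass_eq_of_sum_1 _ _ hsumA]
    exact Finset.centerMass_mem_convexHull _
      (fun v hv => div_nonneg ((hmemA v).1 hv).le hSpos.le)
      (by rw [hsumA]; norm_num)
      (fun v hv => Set.mem_image_of_mem p hv)
  have hxB : ∑ v ∈ B, (-w v / S) • p v ∈ convexHull ℝ (p '' (B : Set V)) := by
    rw [← Finset.centerMass_eq_of_sum_1 _ _ hsumB]
    exact Finset.centerMass_mem_convexHull _
      (fun v hv => div_nonneg (neg_nonneg.2 ((hmemB v).1 hv).le) hSpos.le)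
      (by rw [hsumB]; norm_num)
      (fun v hv => Set.mem_image_of_mem p hv)
  have hnfA : ¬ IsBdryFace p A := by
    intro hf
    have hBA : B ⊆ A := exposed_absorb hP hf
      (fun v hv => div_pos (neg_pos.2 ((hmemB v).1 hv)) hSpos) hsumB
      (by rw [← hxeq]; exact hxA)
    obtain ⟨b, hb⟩ := hBne
    exact Finset.disjoint_left.1 hABdisj (hBA hb) hb
  have hnfB : ¬ IsBdryFace p B := by
    intro hf
    have hAB : A ⊆ B := exposed_absorb hP hf
      (fun v hv => div_pos ((hmemA v).1 hv) hSpos) hsumA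
      (by rw [hxeq]; exact hxB)
    obtain ⟨a, ha⟩ := hAne
    exact Finset.disjoint_left.1 hABdisj ha (hAB ha)
  have hA' : σ ⊆ A ∨ τ ⊆ A := by
    by_contra h
    push_neg at h
    exact hnfA ((hbdry A).2 h)
  have hB' : σ ⊆ B ∨ τ ⊆ B := by
    by_contra h
    push_neg at h
    exact hnfB ((hbdry B).2 h)
  rcases hA' with hσA | hτA
  · have hτB : τ ⊆ B := by
      rcases hB' with hσB | hτB
      · obtain ⟨v, hv⟩ := hσne
        exact absurd (hσB hv) (fun h => Finset.disjoint_left.1 hABdisj (hσA hv) h)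
      · exact hτB
    exact build_weights hdisj huniv hσne (fun v hv => (hmemA v).1 (hσA hv))
      (fun v hv => (hmemB v).1 (hτB hv)) hwsum hwvec
  · have hσB : σ ⊆ B := by
      rcases hB' with hσB | hτB
      · exact hσB
      · obtain ⟨v, hv⟩ := hσne
        have hvτ : v ∈ σ ∪ τ := Finset.mem_union_left τ hv
        -- τ ⊆ A and τ ⊆ B would contradict disjointness; get element of τ
        obtain ⟨u, hu⟩ : τ.Nonempty := Finset.card_pos.1 (by omega)
        exact absurd (hτB hu) (fun h => Finset.disjoint_left.1 hABdisj (hτA hu) h)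
    refine build_weights (w := fun v => -w v) hdisj huniv hσne
      (fun v hv => neg_pos.2 ((hmemB v).1 (hσB hv)))
      (fun v hv => neg_neg_iff_pos.2 ((hmemA v).1 (hτA hv)))
      (by rw [Finset.sum_neg_distrib, hwsum, neg_zero])
      (by
        rw [Finset.sum_congr rfl (fun v _ => neg_smul (w v) (p v)),
          Finset.sum_neg_distrib, hwvec, neg_zero])

end
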